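/- Let U ⊆ ℂ be open, connected, with 0 ∈ U. Let f = ((f₁, f₂), (f₃, f₄)) : U → Mat(2×2, ℂ) and g = ((g₁, g₂), (g₃, g₄)) : U → Mat(2×2, ℂ) be complex-differentiable with f(0) = 0, g(0) = 0, and g′ = −f·(f′)^♯, where Y^♯ := J₂ Yᵗ J₂ for a 2×2 complex matrix Y. Then throughout U: g₂ = −f₁f₂, g₃ = −f₃f₄, and g₁ + g₄ = −f₁f₄ − f₂f₃. -/

import Mathlib

open Matrix

noncomputable section

/-- `J₂ = ((0,1),(1,0))`. -/
def J2 : Matrix (Fin 2) (Fin 2) ℂ := !![0, 1; 1, 0]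

/-- `Y^♯ = J₂ Yᵗ J₂` for a 2×2 matrix `Y`. -/
def sharp2 (Y : Matrix (Fin 2) (Fin 2) ℂ) : Matrix (Fin 2) (Fin 2) ℂ := J2 * Yᵀ * J2

lemma const_zero_of_deriv_zero (U : Set ℂ) (hU : IsOpen U) (hUconn : IsConnected U)
    (h0U : (0 : ℂ) ∈ U) (h : ℂ → ℂ) (hh : ∀ z ∈ U, HasDerivAt h 0 z) (h0 : h 0 = 0) :
    ∀ z ∈ U, h z = 0 := by
  have hdiff : DifferentiableOn ℂ h U := fun z hz =>
    ((hh z hz).differentiableAt).differentiableWithinAt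
  have han : AnalyticOnNhd ℂ h U := hdiff.analyticOnNhd hU
  obtain ⟨r, hr, hball⟩ := Metric.isOpen_iff.1 hU 0 h0U
  have hconst : ∀ y ∈ Metric.ball (0:ℂ) r, h y = 0 := by
    intro y hy
    have hfd : ∀ x ∈ Metric.ball (0:ℂ) r,
        fderivWithin ℂ h (Metric.ball (0:ℂ) r) x = 0 := by
      intro x hx
      rw [fderivWithin_of_isOpen Metric.isOpen_ball hx,
        ((hh x (hball hx)).hasFDerivAt).fderiv]
      ext; simp
    have := (convex_ball (0:ℂ) r).is_const_of_fderivWithin_eq_zero (𝕜 := ℂ)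
      (fun x hx => ((hh x (hball hx)).differentiableAt).differentiableWithinAt)
      hfd hy (Metric.mem_ball_self hr)
    rw [this, h0]
  have hev : h =ᶠ[nhds (0:ℂ)] 0 :=
    Filter.eventuallyEq_of_mem (Metric.ball_mem_nhds 0 hr) hconst
  exact fun z hz => han.eqOn_zero_of_preconnected_of_eventuallyEq_zero
    hUconn.isPreconnected h0U hev hz

/-- if `f(0) = 0`, `g(0) = 0` and `g′ = −f·(f′)^♯` on the open connected set `U`,
then `g₂ = −f₁f₂`, `g₃ = −f₃f₄` and `g₁ + g₄ = −f₁f₄ − f₂f₃` throughout `U`. -/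
theorem stmt12 (U : Set ℂ) (hU : IsOpen U) (hUconn : IsConnected U) (h0U : (0 : ℂ) ∈ U)
    (f f' g : ℂ → Matrix (Fin 2) (Fin 2) ℂ)
    (hf0 : f 0 = 0) (hg0 : g 0 = 0)
    (hf : ∀ z ∈ U, ∀ i j, HasDerivAt (fun w => f w i j) (f' z i j) z)
    (hg : ∀ z ∈ U, ∀ i j, HasDerivAt (fun w => g w i j) ((-(f z * sharp2 (f' z))) i j) z) :
    ∀ z ∈ U,
      g z 0 1 = -(f z 0 0 * f z 0 1) ∧
      g z 1 0 = -(f z 1 0 * f z 1 1) ∧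
      g z 0 0 + g z 1 1 = -(f z 0 0 * f z 1 1) - f z 0 1 * f z 1 0 := by
  have h1 : ∀ z ∈ U, g z 0 1 + f z 0 0 * f z 0 1 = 0 := by
    refine const_zero_of_deriv_zero U hU hUconn h0U _ (fun z hz => ?_) (by simp [hf0, hg0])
    have := (hg z hz 0 1).add ((hf z hz 0 0).mul (hf z hz 0 1))
    refine this.congr_deriv (Eq.symm ?_)
    simp [sharp2, J2, Matrix.mul_apply, Matrix.vecMul, dotProduct, Matrix.transpose_apply, Fin.sum_univ_two]
    ring
  have h2 : ∀ z ∈ U, g z 1 0 + f z 1 0 * f z 1 1 = 0 := by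
    refine const_zero_of_deriv_zero U hU hUconn h0U _ (fun z hz => ?_) (by simp [hf0, hg0])
    have := (hg z hz 1 0).add ((hf z hz 1 0).mul (hf z hz 1 1))
    refine this.congr_deriv (Eq.symm ?_)
    simp [sharp2, J2, Matrix.mul_apply, Matrix.vecMul, dotProduct, Matrix.transpose_apply, Fin.sum_univ_two]
    ring
  have h3 : ∀ z ∈ U,
      g z 0 0 + g z 1 1 + (f z 0 0 * f z 1 1 + f z 0 1 * f z 1 0) = 0 := by
    refine const_zero_of_deriv_zero U hU hUconn h0U _ (fun z hz => ?_) (by simp [hf0, hg0])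
    have := ((hg z hz 0 0).add (hg z hz 1 1)).add
      (((hf z hz 0 0).mul (hf z hz 1 1)).add ((hf z hz 0 1).mul (hf z hz 1 0)))
    refine this.congr_deriv (Eq.symm ?_)
    simp [sharp2, J2, Matrix.mul_apply, Matrix.vecMul, dotProduct, Matrix.transpose_apply, Fin.sum_univ_two]
    ring
  intro z hz
  refine ⟨by linear_combination h1 z hz, by linear_combination h2 z hz,
    by linear_combination h3 z hz⟩
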